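/- arXiv:2201.00858 — 4 statements merged into one kernel-verified Lean document; each statement's English description precedes it below -/
import Mathlib

section
/- Let Π be a protocol run by n parties, Ū a utility vector, and ε ≥ 0. Then Π is an ε-Nash equilibrium w.r.t. Ū if and only if Π is (ε, X)-compliant w.r.t. Ū for every infraction predicate X (i.e., the (ε,Ū)-cone of Π is contained in (𝕊_X)^n for every infraction predicate X, where 𝕊_X is the set of X-compliant strategies). -/
/-! Statement 1: Π is an ε-Nash equilibrium w.r.t. Ū iff Π is (ε,X)-compliant
w.r.t. Ū for every infraction predicate X. An infraction predicate is modeled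
by its induced set of X-compliant strategies, which (by the defining property
of infraction predicates) always contains the honest strategy Π. -/

def DirectlyReachable {n : ℕ} {S : Type*} (ε : ℝ) (U : Fin n → (Fin n → S) → ℝ)
    (σ σ' : Fin n → S) : Prop :=
  ∃ i : Fin n, (∀ j, j ≠ i → σ' j = σ j) ∧ U i σ' > U i σ + ε ∧
    ∀ σ'' : Fin n → S, (∀ j, j ≠ i → σ'' j = σ j) → U i σ'' ≤ U i σ'

def Cone {n : ℕ} {S : Type*} (ε : ℝ) (U : Fin n → (Fin n → S) → ℝ)
    (σ : Fin n → S) : Set (Fin n → S) :=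
  {σ' | σ' = σ ∨ Relation.TransGen (DirectlyReachable ε U) σ σ'}

def IsEpsNash {n : ℕ} {S : Type*} (ε : ℝ) (U : Fin n → (Fin n → S) → ℝ)
    (σ : Fin n → S) : Prop :=
  ∀ i : Fin n, ∀ σ' : Fin n → S, (∀ j, j ≠ i → σ' j = σ j) → U i σ' ≤ U i σ + ε

/-- Π is (ε,X)-compliant w.r.t. Ū, where the infraction predicate X is given by
its set `complX` of X-compliant strategies: every profile in the (ε,Ū)-cone of
the all-honest profile consists of X-compliant strategies. -/
def IsCompliant {n : ℕ} {S : Type*} (ε : ℝ) (U : Fin n → (Fin n → S) → ℝ)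
    (π : S) (complX : Set S) : Prop :=
  Cone ε U (fun _ => π) ⊆ {σ | ∀ i, σ i ∈ complX}

theorem stmt1 {n : ℕ} {S : Type*} [Fintype S] (ε : ℝ) (hε : 0 ≤ ε) (π : S)
    (U : Fin n → (Fin n → S) → ℝ) :
    IsEpsNash ε U (fun _ => π) ↔
      ∀ complX : Set S, π ∈ complX → IsCompliant ε U π complX := by
  constructor
  · intro hNash complX hπ σ' hσ'
    rcases hσ' with h | h
    · intro i; rw [h]; exact hπ
    · exfalso
      induction h with
      | single h =>
        obtain ⟨i, hj, hgt, _⟩ := h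
        exact absurd (hNash i _ hj) (not_le.mpr hgt)
      | tail _ _ ih => exact ih
  · intro hC i σ' hj
    by_contra hlt
    push_neg at hlt
    -- find a best response
    have hne : (Finset.univ : Finset S).Nonempty := ⟨π, Finset.mem_univ π⟩
    obtain ⟨s, -, hs⟩ := Finset.exists_max_image Finset.univ
      (fun s => U i (Function.update (fun _ => π) i s)) hne
    set σm := Function.update (fun _ => π) i s with hσm
    have hjm : ∀ j, j ≠ i → σm j = π := by
      intro j hji; simp [hσm, Function.update_of_ne hji]
    have hbest : ∀ σ'' : Fin n → S, (∀ j, j ≠ i → σ'' j = π) → U i σ'' ≤ U i σm := by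
      intro σ'' h''
      have : σ'' = Function.update (fun _ => π) i (σ'' i) := by
        funext j
        by_cases hji : j = i
        · subst hji; simp
        · rw [h'' j hji, Function.update_of_ne hji]
      rw [this]
      exact hs (σ'' i) (Finset.mem_univ _)
    have hgt : U i σm > U i (fun _ => π) + ε := lt_of_lt_of_le hlt (hbest σ' hj)
    have hreach : σm ∈ Cone ε U (fun _ => π) :=
      Or.inr (Relation.TransGen.single ⟨i, hjm, hgt, hbest⟩)
    have := hC {π} rfl hreach i
    simp only [Set.mem_singleton_iff] at this
    have hne2 : σm i ≠ π ∨ True := Or.inr trivial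
    -- σm i = π contradicts hgt via hbest? use: σm = (fun _ => π)
    have hσmeq : σm = (fun _ => π) := by
      funext j
      by_cases hji : j = i
      · subst hji; exact this
      · exact hjm j hji
    rw [hσmeq] at hgt
    linarith
end

section
/- Key inequality in the free-rider argument: under the conditions of the resource-proportional profit theorem, for the party i* maximizing C_i − (β_i − α)·ξ(μ_{P_i})·R, and any X_abs-compliant unilateral deviation σ of P_{i*} from the all-honest profile, it holds that U_{i*}(σ) < U_{i*}(σ_{i*}), where σ_{i*} is the profile in which P_{i*} always abstains. Concretely: U_{i*}(σ_{i*}) − U_{i*}(σ) ≥ (1/q)·C_{i*} − β_{i*}·ξ(μ_{P_{i*}})·R > 0. -/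
/-! Statement 4: key inequality of the free-rider argument. For the maximizing
party i*, any X_abs-compliant unilateral deviation σ (whose utility is at most
ξ(μ_{i*})·R − C_{i*}/q) is strictly worse than always abstaining (whose
utility is (1−β_{i*})·ξ(μ_{i*})·R); concretely the gap is at least
(1/q)·C_{i*} − β_{i*}·ξ(μ_{i*})·R > 0. Here `xiR` denotes ξ(μ_{P_{i*}})·R. -/
theorem stmt4 (q C Cst β xiR Uσ Uabs : ℝ)
    (hq : 1 ≤ q) (hxiR : 0 ≤ xiR) (hβ0 : 0 ≤ β) (hβ1 : β ≤ 1)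
    -- honest expected cost over the execution is at least the cost of one query
    (hCCst : C ≤ Cst)
    -- assumption: C > β·ξ(μ)·R·q
    (hC : β * xiR * q < C)
    -- an X_abs-compliant deviation has rewards ≤ ξ(μ)·R and cost ≥ C_{i*}/q
    (hUσ : Uσ ≤ xiR - Cst / q)
    -- the always-abstain strategy: rewards (1−β)·ξ(μ)·R, zero cost
    (hUabs : Uabs = (1 - β) * xiR) :
    (1 / q) * Cst - β * xiR ≤ Uabs - Uσ ∧
    0 < (1 / q) * Cst - β * xiR ∧
    Uσ < Uabs := by
  have hq0 : (0:ℝ) < q := lt_of_lt_of_le one_pos hq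
  have hgap : (1 / q) * Cst - β * xiR ≤ Uabs - Uσ := by
    rw [hUabs]
    have : (1 - β) * xiR - (xiR - Cst / q) = (1 / q) * Cst - β * xiR := by
      field_simp; ring
    nlinarith [hUσ]
  have hpos : 0 < (1 / q) * Cst - β * xiR := by
    have h1 : β * xiR * q < Cst := lt_of_lt_of_le hC hCCst
    have h2 : β * xiR < Cst / q := (lt_div_iff₀ hq0).mpr h1
    have h3 : (1 / q) * Cst = Cst / q := by ring
    linarith
  exact ⟨hgap, hpos, by linarith⟩
end

section
/- For 0 ≤ δ ≤ 1, real μ ∈ [0,1], and positive real q with δ·q < 1: N·μ·q·δ − N·((1−δ)^{(1−μ)q} − (1−δ)^q) ≤ (N·q²/2)·δ², for any N ≥ 0. This follows from (1−δ)^{(1−μ)q} ≥ 1 − (1−μ)·q·δ (Bernoulli) and (1−δ)^q ≤ 1 − q·δ + (q²/2)·δ². -/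
lemma pow_le_quad (δ : ℝ) (hδ0 : 0 ≤ δ) (hδ1 : δ ≤ 1) :
    ∀ q : ℕ, (1 - δ) ^ q ≤ 1 - q * δ + (q : ℝ) ^ 2 / 2 * δ ^ 2 := by
  intro q
  induction q with
  | zero => simp
  | succ n ih =>
    have h1 : (0:ℝ) ≤ 1 - δ := by linarith
    have h2 : (0:ℝ) ≤ 1 - n * δ + (n : ℝ) ^ 2 / 2 * δ ^ 2 := by nlinarith [sq_nonneg ((n:ℝ)*δ - 1)]
    have h3 : (1 - δ) ^ (n+1) = (1 - δ)^n * (1 - δ) := by ring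
    have h4 : (1 - δ)^n * (1 - δ) ≤ (1 - n * δ + (n : ℝ) ^ 2 / 2 * δ ^ 2) * (1 - δ) :=
      mul_le_mul_of_nonneg_right ih h1
    have hn : (0:ℝ) ≤ n := Nat.cast_nonneg n
    push_cast
    nlinarith [sq_nonneg δ, mul_nonneg (mul_nonneg (sq_nonneg (n:ℝ)) (sq_nonneg δ)) hδ0]

lemma bern_aux (δ : ℝ) (hδ1 : δ ≤ 1) (n : ℕ) : 1 - n * δ ≤ (1 - δ) ^ n := by
  have := one_add_mul_le_pow (a := -δ) (by linarith) n
  calc 1 - n * δ = 1 + n * (-δ) := by ring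
    _ ≤ (1 + -δ) ^ n := this
    _ = (1 - δ) ^ n := by ring_nf

/-! Statement 9: the analytic inequality underlying the Bitcoin approximate-
equilibrium bound. The exponents are natural numbers of oracle queries:
a = μ·q and q − a = (1−μ)·q, so N·μ·q·δ = N·a·δ. -/
theorem stmt9 (N δ : ℝ) (q a : ℕ) (ha : a ≤ q)
    (hδ0 : 0 ≤ δ) (hδ1 : δ ≤ 1) (hδq : δ * q < 1) (hN : 0 ≤ N) :
    N * a * δ - N * ((1 - δ) ^ (q - a) - (1 - δ) ^ q)
      ≤ N * q ^ 2 / 2 * δ ^ 2 := by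
  have hb := bern_aux δ hδ1 (q - a)
  have hq := pow_le_quad δ hδ0 hδ1 q
  have hcast : ((q - a : ℕ) : ℝ) = (q : ℝ) - a := by
    push_cast [Nat.cast_sub ha]; ring
  rw [hcast] at hb
  have key : (a : ℝ) * δ - ((1 - δ) ^ (q - a) - (1 - δ) ^ q)
      ≤ (q : ℝ) ^ 2 / 2 * δ ^ 2 := by nlinarith
  nlinarith [mul_le_mul_of_nonneg_left key hN]
end

section
/- In predictable SL-PoS with Relative Profit, any X_self-compliant unilateral deviation of party P (stake μ < 1/2) from the all-honest profile in which P abstains in an expected number A > 0 of its led slots has utility ((μN − A)/(N − A))·(R−C)/R, which is strictly less than the honest utility μ·(R−C)/R. Hence no X_self-compliant deviation improves P's Relative Profit. -/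
/-! Statement 19: in predictable SL-PoS with Relative Profit, an
X_self-compliant unilateral deviation of party P (stake μ < 1/2) that abstains
in an expected A > 0 of its led slots has utility
((μN − A)·R − (μN − A)·C)/((N − A)·R) = ((μN − A)/(N − A))·(R−C)/R, which is
strictly less than the honest utility μ·(R−C)/R; hence no X_self-compliant
deviation improves P's Relative Profit. -/
theorem stmt19 (N A R C μ : ℝ) (hA0 : 0 < A) (hAN : A < N)
    (hμ0 : 0 < μ) (hμ : μ < 1 / 2) (hR : 0 < R) (hRC : C < R) :
    ((μ * N - A) * R - (μ * N - A) * C) / ((N - A) * R)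
      = (μ * N - A) / (N - A) * ((R - C) / R) ∧
    ((μ * N - A) * R - (μ * N - A) * C) / ((N - A) * R)
      < μ * ((R - C) / R) := by
  have hNA : (0:ℝ) < N - A := by linarith
  have hRC0 : (0:ℝ) < R - C := by linarith
  have heq : ((μ * N - A) * R - (μ * N - A) * C) / ((N - A) * R)
      = (μ * N - A) / (N - A) * ((R - C) / R) := by
    field_simp
  refine ⟨heq, ?_⟩
  rw [heq]
  have hlt : (μ * N - A) / (N - A) < μ := by
    rw [div_lt_iff₀ hNA]
    nlinarith
  have hpos : 0 < (R - C) / R := div_pos hRC0 hR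
  exact mul_lt_mul_of_pos_right hlt hpos
end
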